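/- If g2, g3 ∈ ℝ[t] satisfy Δ := g2³ - 27g3² = c·t^a·(1-t)^b with c > 0 and a,b ≥ 1, and 2g2g3' - 3g2'g3 = c'·t^{a'}·(1-t)^{b'} with c' ≠ 0, and g2(0), g2(1) > 0 with g3(0)·g3(1) < 0, then a' = a - 1 and b' = b - 1. -/
import Mathlib


open Polynomial

lemma stmt5_aux (p : ℝ[X]) (x : ℝ) (k : ℕ) (h : p.eval x ≠ 0) :
    rootMultiplicity x (p * (X - C x) ^ k) = k := by
  rw [rootMultiplicity_mul_X_sub_C_pow (fun h0 => h (by simp [h0])),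
    rootMultiplicity_eq_zero (by simpa [IsRoot] using h), zero_add]

/-- If `g₂, g₃ ∈ ℝ[t]` satisfy `Δ = g₂³ - 27g₃² = c·tᵃ·(1-t)ᵇ` with `c > 0`,
`a, b ≥ 1`, and `2g₂g₃' - 3g₂'g₃ = c'·t^{a'}·(1-t)^{b'}` with `c' ≠ 0`, and
`g₂(0), g₂(1) > 0`, `g₃(0)·g₃(1) < 0`, then `a' = a - 1` and `b' = b - 1`. -/
theorem stmt5 (g2 g3 : ℝ[X]) (a b a' b' : ℕ) (c c' : ℝ)
    (ha : 1 ≤ a) (hb : 1 ≤ b) (hc : 0 < c) (hc' : c' ≠ 0)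
    (hΔ : g2 ^ 3 - 27 * g3 ^ 2 = C c * X ^ a * (1 - X) ^ b)
    (hP : 2 * g2 * derivative g3 - 3 * derivative g2 * g3
        = C c' * X ^ a' * (1 - X) ^ b')
    (h20 : 0 < g2.eval 0) (h21 : 0 < g2.eval 1)
    (h3 : g3.eval 0 * g3.eval 1 < 0) :
    a' = a - 1 ∧ b' = b - 1 := by
  obtain ⟨m, rfl⟩ : ∃ m, a = m + 1 := ⟨a - 1, (Nat.succ_pred_eq_of_pos ha).symm⟩
  obtain ⟨n, rfl⟩ : ∃ n, b = n + 1 := ⟨b - 1, (Nat.succ_pred_eq_of_pos hb).symm⟩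
  simp only [Nat.add_sub_cancel]
  -- g3 does not vanish at 0 and 1
  have hΔ0 : g2.eval 0 ^ 3 - 27 * g3.eval 0 ^ 2 = 0 := by
    have := congrArg (eval 0) hΔ
    simpa using this
  have hΔ1 : g2.eval 1 ^ 3 - 27 * g3.eval 1 ^ 2 = 0 := by
    have := congrArg (eval 1) hΔ
    simpa using this
  have hg30 : g3.eval 0 ≠ 0 := by
    intro h0; rw [h0] at hΔ0; nlinarith [pow_pos h20 3]
  have hg31 : g3.eval 1 ≠ 0 := by
    intro h0; rw [h0] at hΔ1; nlinarith [pow_pos h21 3]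
  -- the bracket polynomial
  set S : ℝ[X] := C c * (2 * derivative g3 * X * (1 - X)
      - g3 * (C ((m : ℝ) + 1) * (1 - X) - C ((n : ℝ) + 1) * X)) with hS
  have hm1 : ((m : ℝ) + 1) ≠ 0 := by positivity
  have hn1 : ((n : ℝ) + 1) ≠ 0 := by positivity
  have hS0 : S.eval 0 ≠ 0 := by
    have h : S.eval 0 = -(c * (((m : ℝ) + 1) * g3.eval 0)) := by
      simp only [hS, eval_mul, eval_sub, eval_C, eval_X, eval_pow, eval_one,
        eval_ofNat]
      ring
    rw [h]
    exact neg_ne_zero.2 (mul_ne_zero hc.ne' (mul_ne_zero hm1 hg30))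
  have hS1 : S.eval 1 ≠ 0 := by
    have h : S.eval 1 = c * (((n : ℝ) + 1) * g3.eval 1) := by
      simp only [hS, eval_mul, eval_sub, eval_C, eval_X, eval_pow, eval_one,
        eval_ofNat]
      ring
    rw [h]
    exact mul_ne_zero hc.ne' (mul_ne_zero hn1 hg31)
  -- derivative of Δ
  have hDer : derivative (g2 ^ 3 - 27 * g3 ^ 2)
      = 3 * g2 ^ 2 * derivative g2 - 54 * g3 * derivative g3 := by
    simp [derivative_pow, map_ofNat]; ring
  have hDΔ : derivative (C c * X ^ (m + 1) * (1 - X) ^ (n + 1))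
      = C c * (C ((m : ℝ) + 1) * X ^ m * (1 - X) ^ (n + 1)
          - C ((n : ℝ) + 1) * X ^ (m + 1) * (1 - X) ^ n) := by
    simp [derivative_pow]
    push_cast
    ring
  -- the key identity
  have key : g2 ^ 2 * (C c' * X ^ a' * (1 - X) ^ b')
      = X ^ m * (1 - X) ^ n * S := by
    have h1 : g2 ^ 2 * (2 * g2 * derivative g3 - 3 * derivative g2 * g3)
        = 2 * derivative g3 * (g2 ^ 3 - 27 * g3 ^ 2)
          - g3 * derivative (g2 ^ 3 - 27 * g3 ^ 2) := by
      rw [hDer]; ring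
    rw [← hP, h1, hΔ]  -- rewrites Δ everywhere
    rw [hDΔ, hS]
    ring
  -- root multiplicity at 0
  have e0L : g2 ^ 2 * (C c' * X ^ a' * (1 - X) ^ b')
      = (g2 ^ 2 * C c' * (1 - X) ^ b') * (X - C 0) ^ a' := by
    simp; ring
  have e0R : X ^ m * (1 - X) ^ n * S = ((1 - X) ^ n * S) * (X - C 0) ^ m := by
    simp; ring
  have ha' : a' = m := by
    have h1 := stmt5_aux (g2 ^ 2 * C c' * (1 - X) ^ b') 0 a'
      (by simp [hc', h20.ne'])
    have h2 := stmt5_aux ((1 - X) ^ n * S) 0 m (by simp [hS0])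
    rw [← e0L, key, e0R, h2] at h1
    exact h1.symm
  -- root multiplicity at 1
  have e1 : ∀ k : ℕ, (1 - X : ℝ[X]) ^ k = C ((-1 : ℝ) ^ k) * (X - C 1) ^ k := by
    intro k
    rw [map_pow, ← mul_pow]
    congr 1
    rw [map_neg, map_one]
    ring
  have e1L : g2 ^ 2 * (C c' * X ^ a' * (1 - X) ^ b')
      = (g2 ^ 2 * C c' * X ^ a' * C ((-1 : ℝ) ^ b')) * (X - C 1) ^ b' := by
    rw [e1 b']; ring
  have e1R : X ^ m * (1 - X) ^ n * S
      = (X ^ m * C ((-1 : ℝ) ^ n) * S) * (X - C 1) ^ n := by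
    rw [e1 n]; ring
  have hb' : b' = n := by
    have h1 := stmt5_aux (g2 ^ 2 * C c' * X ^ a' * C ((-1 : ℝ) ^ b')) 1 b'
      (by simp [hc', h21.ne'])
    have h2 := stmt5_aux (X ^ m * C ((-1 : ℝ) ^ n) * S) 1 n (by simp [hS1])
    rw [← e1L, key, e1R, h2] at h1
    exact h1.symm
  exact ⟨ha', hb'⟩
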